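/- Let ε be a real random variable with CDF F, density f Lipschitz with constant l₀ and satisfying F(0) = τ. Let K be a symmetric probability density with second absolute moment κ₂ = ∫v²K(v)dv < ∞ and CDF K̄. Then for any h > 0, |E[K̄(−ε/h)] − τ| ≤ (l₀/2)·κ₂·h². -/
import Mathlib


open MeasureTheory

/-- Pointwise second-order bound for a Lipschitz density. -/
lemma aux_symm_diff_bound (l₀ : ℝ) (f : ℝ → ℝ) (hfi : Integrable f)
    (hLip : ∀ u v : ℝ, |f u - f v| ≤ l₀ * |u - v|) (y : ℝ) (hy : 0 ≤ y) :
    |(∫ x in Set.Iic y, f x) + (∫ x in Set.Iic (-y), f x) -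
      2 * ∫ x in Set.Iic (0:ℝ), f x| ≤ l₀ * y^2 := by
  have e1 : (∫ x in Set.Iic y, f x) - ∫ x in Set.Iic (0:ℝ), f x
      = ∫ u in (0:ℝ)..y, f u :=
    intervalIntegral.integral_Iic_sub_Iic hfi.integrableOn hfi.integrableOn
  have e2 : (∫ x in Set.Iic (0:ℝ), f x) - ∫ x in Set.Iic (-y), f x
      = ∫ u in (-y)..(0:ℝ), f u :=
    intervalIntegral.integral_Iic_sub_Iic hfi.integrableOn hfi.integrableOn
  have e3 : (∫ u in (-y)..(0:ℝ), f u) = ∫ u in (0:ℝ)..y, f (-u) := by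
    rw [intervalIntegral.integral_comp_neg f]
    simp
  have hfneg : Integrable (fun u : ℝ => f (-u)) := hfi.comp_neg
  have e4 : (∫ x in Set.Iic y, f x) + (∫ x in Set.Iic (-y), f x) -
      2 * ∫ x in Set.Iic (0:ℝ), f x
      = ∫ u in (0:ℝ)..y, (f u - f (-u)) := by
    rw [intervalIntegral.integral_sub hfi.intervalIntegrable hfneg.intervalIntegrable,
      ← e1, ← e3, ← e2]
    ring
  rw [e4]
  calc |∫ u in (0:ℝ)..y, (f u - f (-u))|
      ≤ ∫ u in (0:ℝ)..y, |f u - f (-u)| :=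
        intervalIntegral.abs_integral_le_integral_abs hy
    _ ≤ ∫ u in (0:ℝ)..y, l₀ * (2 * u) := by
        apply intervalIntegral.integral_mono_on hy
          ((hfi.intervalIntegrable.sub hfneg.intervalIntegrable).abs)
          ((continuous_const.mul (continuous_const.mul continuous_id)).intervalIntegrable _ _)
        intro u hu
        calc |f u - f (-u)| ≤ l₀ * |u - (-u)| := hLip u (-u)
          _ = l₀ * (2 * u) := by
              rw [sub_neg_eq_add]
              rw [abs_of_nonneg (by linarith [hu.1] : (0:ℝ) ≤ u + u)]
              ring
    _ = l₀ * y^2 := by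
        rw [intervalIntegral.integral_const_mul, intervalIntegral.integral_const_mul,
          integral_id]
        ring

theorem smoothing_bias_of_integrated_kernel (τ l₀ h : ℝ)
    (hτ : τ ∈ Set.Ioo (0:ℝ) 1) (hl₀ : 0 < l₀) (hh : 0 < h)
    (f : ℝ → ℝ) (hfnn : ∀ x, 0 ≤ f x) (hfm : Measurable f)
    (hf1 : ∫ x : ℝ, f x = 1)
    (hLip : ∀ u v : ℝ, |f u - f v| ≤ l₀ * |u - v|)
    (hF0 : ∫ x in Set.Iic (0:ℝ), f x = τ)
    (K : ℝ → ℝ) (hKm : Measurable K) (hKnn : ∀ v, 0 ≤ K v)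
    (hKsymm : ∀ v, K (-v) = K v) (hK1 : ∫ v : ℝ, K v = 1)
    (hκ : Integrable (fun v : ℝ => v^2 * K v)) :
    |(∫ x : ℝ, (∫ t in Set.Iic (-(x/h)), K t) * f x) - τ| ≤
      l₀/2 * (∫ v : ℝ, v^2 * K v) * h^2 := by
  -- integrability of f and K
  have hfi : Integrable f := by
    by_contra hc
    rw [integral_undef hc] at hf1; exact one_ne_zero hf1.symm
  have hKi : Integrable K := by
    by_contra hc
    rw [integral_undef hc] at hK1; exact one_ne_zero hK1.symm
  set F : ℝ → ℝ := fun y => ∫ x in Set.Iic y, f x with hFdef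
  have hFmono : Monotone F := fun a b hab =>
    setIntegral_mono_set hfi.integrableOn (Filter.Eventually.of_forall fun x => hfnn x)
      (HasSubset.Subset.eventuallyLE (Set.Iic_subset_Iic.2 hab))
  have hFmeas : Measurable F := hFmono.measurable
  have hFnn : ∀ y, 0 ≤ F y := fun y => setIntegral_nonneg measurableSet_Iic fun x _ => hfnn x
  have hFle : ∀ y, F y ≤ 1 := fun y =>
    hf1 ▸ setIntegral_le_integral hfi (Filter.Eventually.of_forall hfnn)
  set Kb : ℝ → ℝ := fun y => ∫ t in Set.Iic y, K t with hKbdef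
  have hKbmono : Monotone Kb := fun a b hab =>
    setIntegral_mono_set hKi.integrableOn (Filter.Eventually.of_forall fun x => hKnn x)
      (HasSubset.Subset.eventuallyLE (Set.Iic_subset_Iic.2 hab))
  have hKbmeas : Measurable Kb := hKbmono.measurable
  have hKbnn : ∀ y, 0 ≤ Kb y := fun y => setIntegral_nonneg measurableSet_Iic fun x _ => hKnn x
  have hKble : ∀ y, Kb y ≤ 1 := fun y =>
    hK1 ▸ setIntegral_le_integral hKi (Filter.Eventually.of_forall hKnn)
  -- the product function for Fubini
  set g : ℝ → ℝ → ℝ := fun x t => (Set.Iic (-(x/h))).indicator K t * f x with hgdef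
  have hS : MeasurableSet {p : ℝ × ℝ | p.2 ≤ -(p.1/h)} :=
    measurableSet_le measurable_snd ((measurable_fst.div_const h).neg)
  have hgeq : Function.uncurry g =
      Set.indicator {p : ℝ × ℝ | p.2 ≤ -(p.1/h)} (fun p => K p.2 * f p.1) := by
    funext p
    rcases p with ⟨x, t⟩
    simp only [Function.uncurry, hgdef, Set.indicator_apply, Set.mem_Iic, Set.mem_setOf_eq]
    split_ifs <;> simp
  have hgm : Measurable (Function.uncurry g) := by
    rw [hgeq]
    exact ((hKm.comp measurable_snd).mul (hfm.comp measurable_fst)).indicator hS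
  have hgnn : ∀ x t, 0 ≤ g x t := fun x t =>
    mul_nonneg (Set.indicator_nonneg (fun a _ => hKnn a) t) (hfnn x)
  -- inner integral in t
  have hinner : ∀ x, (∫ t, g x t) = Kb (-(x/h)) * f x := by
    intro x
    rw [hgdef]
    simp only
    rw [integral_mul_const, integral_indicator measurableSet_Iic]
  -- integrability on the product
  have hgint : Integrable (Function.uncurry g) (volume.prod volume) := by
    refine (integrable_prod_iff hgm.aestronglyMeasurable).2 ⟨?_, ?_⟩
    · refine Filter.Eventually.of_forall fun x => ?_
      show Integrable (fun t => g x t) volume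
      exact (hKi.indicator measurableSet_Iic).mul_const (f x)
    · have : (fun x => ∫ t, ‖g x t‖) = fun x => Kb (-(x/h)) * f x := by
        funext x
        rw [← hinner x]
        congr 1
        funext t
        exact Real.norm_of_nonneg (hgnn x t)
      simp only [Function.uncurry_apply_pair]
      rw [this]
      refine Integrable.mono' hfi ?_ ?_
      · exact ((hKbmeas.comp ((measurable_id.div_const h).neg)).mul hfm).aestronglyMeasurable
      · refine Filter.Eventually.of_forall fun x => ?_
        rw [Real.norm_of_nonneg (mul_nonneg (hKbnn _) (hfnn x))]
        calc Kb (-(x/h)) * f x ≤ 1 * f x :=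
              mul_le_mul_of_nonneg_right (hKble _) (hfnn x)
          _ = f x := one_mul _
  -- Fubini
  have hswap : (∫ x : ℝ, (∫ t in Set.Iic (-(x/h)), K t) * f x)
      = ∫ t : ℝ, K t * F (-(h*t)) := by
    have l1 : (∫ x : ℝ, (∫ t in Set.Iic (-(x/h)), K t) * f x) = ∫ x, ∫ t, g x t := by
      congr 1
      funext x
      rw [hinner x]
    rw [l1, integral_integral_swap hgint]
    congr 1
    funext t
    have l2 : (fun x => g x t) = (Set.Iic (-(h*t))).indicator (fun x => K t * f x) := by
      funext x
      simp only [hgdef, Set.indicator_apply, Set.mem_Iic]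
      have hiff : t ≤ -(x/h) ↔ x ≤ -(h*t) := by
        rw [neg_div' , le_div_iff₀ hh]
        constructor <;> intro hx <;> nlinarith
      split_ifs with h1 h2 h2
      · rfl
      · exact absurd (hiff.1 h1) h2
      · exact absurd (hiff.2 h2) h1
      · simp
    rw [l2, integral_indicator measurableSet_Iic, integral_const_mul]
  -- symmetrization
  have hsymm : (∫ t : ℝ, K t * F (-(h*t))) = ∫ t : ℝ, K t * F (h*t) := by
    calc (∫ t : ℝ, K t * F (-(h*t))) = ∫ t : ℝ, K (-t) * F (-(h*(-t))) :=
          (integral_neg_eq_self (fun t => K t * F (-(h*t))) volume).symm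
      _ = ∫ t : ℝ, K t * F (h*t) := by
          congr 1; funext t; rw [hKsymm]; ring_nf
  -- integrability of the pieces
  have hint1 : Integrable (fun t : ℝ => K t * F (-(h*t))) := by
    refine Integrable.mono' hKi ?_ ?_
    · exact (hKm.mul (hFmeas.comp ((measurable_const.mul measurable_id).neg))).aestronglyMeasurable
    · refine Filter.Eventually.of_forall fun t => ?_
      rw [Real.norm_of_nonneg (mul_nonneg (hKnn t) (hFnn _))]
      calc K t * F (-(h*t)) ≤ K t * 1 := mul_le_mul_of_nonneg_left (hFle _) (hKnn t)
        _ = K t := mul_one _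
  have hint2 : Integrable (fun t : ℝ => K t * F (h*t)) := by
    refine Integrable.mono' hKi ?_ ?_
    · exact (hKm.mul (hFmeas.comp (measurable_const.mul measurable_id))).aestronglyMeasurable
    · refine Filter.Eventually.of_forall fun t => ?_
      rw [Real.norm_of_nonneg (mul_nonneg (hKnn t) (hFnn _))]
      calc K t * F (h*t) ≤ K t * 1 := mul_le_mul_of_nonneg_left (hFle _) (hKnn t)
        _ = K t := mul_one _
  -- express difference as a single integral
  set D : ℝ → ℝ := fun t => (F (h*t) + F (-(h*t)))/2 - τ with hDdef
  have hkey : (∫ x : ℝ, (∫ t in Set.Iic (-(x/h)), K t) * f x) - τ = ∫ t : ℝ, K t * D t := by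
    have : (fun t : ℝ => K t * D t)
        = fun t => (K t * F (h*t)/2 + K t * F (-(h*t))/2) - τ * K t := by
      funext t; simp only [hDdef]; ring
    rw [this, integral_sub (by exact (hint2.div_const 2).add (hint1.div_const 2))
      (hKi.const_mul τ),
      integral_add (by exact hint2.div_const 2) (by exact hint1.div_const 2),
      integral_div, integral_div,
      integral_const_mul, hK1, hswap, hsymm]
    ring
  rw [hkey]
  -- pointwise bound and conclusion
  have hptw : ∀ t : ℝ, |K t * D t| ≤ (l₀/2 * h^2) * (t^2 * K t) := by
    intro t
    have hDb : |D t| ≤ l₀/2 * (h*t)^2 := by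
      rcases le_total 0 (h*t) with hy | hy
      · have := aux_symm_diff_bound l₀ f hfi hLip (h*t) hy
        rw [hDdef, ← hF0]
        simp only
        rw [abs_le] at this ⊢
        constructor <;> [linarith [this.1]; linarith [this.2]]
      · have := aux_symm_diff_bound l₀ f hfi hLip (-(h*t)) (by linarith)
        rw [neg_neg] at this
        rw [hDdef, ← hF0]
        simp only
        rw [abs_le] at this ⊢
        rw [neg_pow, show (-1:ℝ)^2 = 1 by norm_num, one_mul] at this
        constructor <;> [linarith [this.1]; linarith [this.2]]
    rw [abs_mul, abs_of_nonneg (hKnn t)]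
    calc K t * |D t| ≤ K t * (l₀/2 * (h*t)^2) :=
          mul_le_mul_of_nonneg_left hDb (hKnn t)
      _ = (l₀/2 * h^2) * (t^2 * K t) := by ring
  have hKD : Integrable (fun t : ℝ => K t * D t) := by
    refine Integrable.mono' (hκ.const_mul (l₀/2 * h^2)) ?_ ?_
    · refine Measurable.aestronglyMeasurable (hKm.mul ?_)
      refine Measurable.sub ?_ measurable_const
      exact ((hFmeas.comp (measurable_const.mul measurable_id)).add
        (hFmeas.comp ((measurable_const.mul measurable_id).neg))).div_const 2
    · exact Filter.Eventually.of_forall fun t => (Real.norm_eq_abs _) ▸ hptw t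
  calc |∫ t : ℝ, K t * D t| ≤ ∫ t : ℝ, |K t * D t| := by
        have := norm_integral_le_integral_norm (μ := volume) (fun t : ℝ => K t * D t)
        simpa only [Real.norm_eq_abs] using this
    _ ≤ ∫ t : ℝ, (l₀/2 * h^2) * (t^2 * K t) :=
        integral_mono hKD.abs (hκ.const_mul _) hptw
    _ = l₀/2 * (∫ v : ℝ, v^2 * K v) * h^2 := by
        rw [integral_const_mul]; ring
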